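/- There is an absolute constant c > 0 such that for every sufficiently large integer N, any coloring of {1, 2, …, N} with at most c·log log N colors contains a monochromatic 3-term arithmetic progression, i.e., three distinct integers x, x+d, x+2d (d > 0) of the same color. -/

import Mathlib

lemma nat_bound (r : ℕ) (hr : 1 ≤ r) :
    2*(r+1)*(2*r*(8*r^2)^(2^r - 1)) ≤ 2^(2^(6*r)) := by
  have hp1 : 1 ≤ 2^r := Nat.one_le_two_pow
  have h1 : 2*(r+1)*(2*r*(8*r^2)^(2^r - 1)) ≤ (8*r^2)^(2^r) := by
    have e : (8*r^2)^(2^r) = (8*r^2) * (8*r^2)^(2^r - 1) := by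
      rw [← pow_succ']
      congr 1
      omega
    rw [e]
    have h2 : 2*(r+1)*(2*r) ≤ 8*r^2 := by nlinarith
    calc 2*(r+1)*(2*r*(8*r^2)^(2^r - 1)) = (2*(r+1)*(2*r))*(8*r^2)^(2^r - 1) := by ring
      _ ≤ (8*r^2)*(8*r^2)^(2^r - 1) := Nat.mul_le_mul_right _ h2
  have h3 : (8*r^2)^(2^r) ≤ (2^(5*r))^(2^r) := by
    apply Nat.pow_le_pow_left
    have hr2 : r^2 ≤ (2^r)^2 := Nat.pow_le_pow_left (Nat.le_of_lt (Nat.lt_two_pow_self (n := r))) 2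
    have h8 : 8*r^2 ≤ 8*(2^r)^2 := by omega
    have he : 8*(2^r)^2 = 2^(2*r+3) := by
      rw [pow_add, ← pow_mul]
      ring
    rw [he] at h8
    calc 8*r^2 ≤ 2^(2*r+3) := h8
      _ ≤ 2^(5*r) := Nat.pow_le_pow_right (by norm_num) (by omega)
  have h4 : (2^(5*r))^(2^r) ≤ 2^(2^(6*r)) := by
    rw [← pow_mul]
    apply Nat.pow_le_pow_right (by norm_num)
    have h5 : 5*r < 2^(5*r) := Nat.lt_two_pow_self (n := 5*r)
    calc 5*r*2^r ≤ 2^(5*r)*2^r := Nat.mul_le_mul_right _ (le_of_lt h5)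
      _ = 2^(6*r) := by rw [← pow_add]; congr 1; omega
  omega

lemma real_bound (N r : ℕ) (hr : 1 ≤ r) (hN : 3 ≤ N)
    (hrc : (r : ℝ) ≤ (1/100) * Real.log (Real.log N)) :
    (2^(2^(6*r)) : ℕ) ≤ N := by
  have hN3 : (3:ℝ) ≤ (N:ℝ) := by exact_mod_cast hN
  have hNpos : (0:ℝ) < (N:ℝ) := by linarith
  have hr1 : (1:ℝ) ≤ (r:ℝ) := by exact_mod_cast hr
  have h100 : (100:ℝ)*r ≤ Real.log (Real.log N) := by linarith
  have hlogN : 1 < Real.log N := by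
    rw [Real.lt_log_iff_exp_lt hNpos]
    calc Real.exp 1 < 2.7182818286 := Real.exp_one_lt_d9
      _ < 3 := by norm_num
      _ ≤ (N:ℝ) := hN3
  have hlogNpos : (0:ℝ) < Real.log N := by linarith
  have hexp100 : Real.exp (100*r) ≤ Real.log N := by
    rw [← Real.exp_log hlogNpos]
    exact Real.exp_le_exp.mpr h100
  have hlog2 : Real.log 2 < 1 := by
    have := Real.log_two_lt_d9
    linarith
  have hlog2pos : (0:ℝ) < Real.log 2 := Real.log_pos (by norm_num)
  -- step 1 : (2^(6r) : ℝ) ≤ log N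
  have hm : ((2^(6*r) : ℕ) : ℝ) ≤ Real.log N := by
    have e1 : ((2^(6*r) : ℕ) : ℝ) = Real.exp ((6*(r:ℝ)) * Real.log 2) := by
      rw [show ((2^(6*r):ℕ):ℝ) = (2:ℝ)^(6*r) by push_cast; ring]
      rw [← Real.exp_log (by positivity : (0:ℝ) < (2:ℝ)^(6*r)), Real.log_pow]
      norm_cast
    rw [e1]
    refine le_trans (Real.exp_le_exp.mpr ?_) hexp100
    nlinarith
  -- step 2 : (2^(2^(6r)) : ℝ) ≤ N
  have hfin : ((2^(2^(6*r)) : ℕ) : ℝ) ≤ (N:ℝ) := by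
    set m : ℕ := 2^(6*r) with hmdef
    have e2 : ((2^m : ℕ) : ℝ) = Real.exp ((m:ℝ) * Real.log 2) := by
      rw [show ((2^m:ℕ):ℝ) = (2:ℝ)^m by push_cast; ring]
      rw [← Real.exp_log (by positivity : (0:ℝ) < (2:ℝ)^m), Real.log_pow]
    rw [e2, ← Real.exp_log hNpos]
    apply Real.exp_le_exp.mpr
    have hm0 : (0:ℝ) ≤ (m:ℝ) := by positivity
    nlinarith [hm]
  exact_mod_cast hfin
open Finset in


set_option maxHeartbeats 2000000 in
lemma key_lemma (N n r : ℕ) (hr : 1 ≤ r)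
    (hbig : 2*r*(8*r^2)^(2^r - 1) ≤ n)
    (hN : 2*(r+1)*n ≤ N)
    (χ : ℤ → Fin r)
    (Hno : ∀ a d : ℤ, 1 ≤ a → 0 < d → a + 2*d ≤ (N:ℤ) →
      ¬(χ a = χ (a+d) ∧ χ a = χ (a+2*d))) : False := by
  have hpow1 : 1 ≤ (8*r^2)^(2^r - 1) := Nat.one_le_pow _ _ (by positivity)
  have hn2 : 2 ≤ n := le_trans (by nlinarith) hbig
  have hn1R : (1:ℝ) ≤ (n:ℝ) := by exact_mod_cast le_trans (by omega) hn2
  have h8r1 : (1:ℝ) ≤ 8*(r:ℝ)^2 := by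
    have : (1:ℝ) ≤ (r:ℝ) := by exact_mod_cast hr
    nlinarith
  have hbigR : 2*(r:ℝ)*(8*(r:ℝ)^2)^(2^r - 1) ≤ (n:ℝ) := by exact_mod_cast hbig
  have hNR : 2*((r:ℤ)+1)*(n:ℤ) ≤ (N:ℤ) := by exact_mod_cast hN
  have main : ∀ k, k ≤ r → ∃ s : ℕ → ℤ, ∃ c : ℕ → Fin r, ∃ X : Finset ℤ,
      s 0 = ((r:ℤ)+1) * n ∧
      (∀ i, i ≤ k → ((r:ℤ)+1)*n - i*n ≤ s i) ∧
      (∀ j i, j < i → i ≤ k → s i < s j) ∧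
      X ⊆ Finset.Icc (1:ℤ) (n:ℤ) ∧
      ((n:ℝ) ≤ (8*(r:ℝ)^2)^(2^k - 1) * X.card) ∧
      (∀ j j', j < k → j' < k → c j = c j' → j = j') ∧
      (∀ x ∈ X, ∀ j, j < k → χ (2 * s j - x) = c j ∧ χ (s j + s k - x) = c j) := by
    intro k
    induction k with
    | zero =>
      intro _
      refine ⟨fun _ => ((r:ℤ)+1)*n, fun _ => ⟨0, hr⟩, Finset.Icc (1:ℤ) (n:ℤ), rfl, ?_, ?_,
        Finset.Subset.refl _, ?_, ?_, ?_⟩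
      · intro i hi
        interval_cases i
        simp
      · intro j i hj hi
        exact absurd (lt_of_lt_of_le hj hi) (Nat.not_lt_zero j)
      · have hcc : (Finset.Icc (1:ℤ) (n:ℤ)).card = n := by
          rw [Int.card_Icc]
          omega
        rw [hcc]
        simp
      · intro j j' hj
        exact absurd hj (Nat.not_lt_zero j)
      · intro x hx j hj
        exact absurd hj (Nat.not_lt_zero j)
    | succ k ih =>
      intro hk1
      have hkr : k < r := hk1
      obtain ⟨s, c, X, hs0, hlow, hstrict, hsub, hcard, hdist, hQ⟩ := ih (le_of_lt hkr)
      set B : ℝ := (8*(r:ℝ)^2)^(2^k - 1) with hBdef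
      have hB1 : (1:ℝ) ≤ B := one_le_pow₀ h8r1
      have hBpos : (0:ℝ) < B := lt_of_lt_of_le one_pos hB1
      have hBr : B ≤ (8*(r:ℝ)^2)^(2^r - 1) := by
        apply pow_le_pow_right₀ h8r1
        have := Nat.pow_le_pow_right (by norm_num : 1 ≤ 2) hkr.le
        omega
      have hr1R : (1:ℝ) ≤ (r:ℝ) := by exact_mod_cast hr
      -- pigeonhole on colors
      have hne : (univ : Finset (Fin r)).Nonempty := ⟨⟨0, hr⟩, mem_univ _⟩
      have hsum : X.card = ∑ b ∈ (univ : Finset (Fin r)),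
          (X.filter (fun x => χ (2*s k - x) = b)).card :=
        Finset.card_eq_sum_card_fiberwise (fun x _ => mem_univ _)
      obtain ⟨c0, -, hc0⟩ : ∃ b ∈ (univ : Finset (Fin r)),
          X.card ≤ r * (X.filter (fun x => χ (2*s k - x) = b)).card := by
        apply Finset.exists_le_of_sum_le hne
        have hs1 : ∑ b ∈ (univ : Finset (Fin r)),
            r * (X.filter (fun x => χ (2*s k - x) = b)).card = r * X.card := by
          rw [← Finset.mul_sum, ← hsum]
        rw [hs1, Finset.sum_const, Finset.card_univ, Fintype.card_fin, smul_eq_mul]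
      set C := X.filter (fun x => χ (2*s k - x) = c0) with hCdef
      have hCsub : C ⊆ X := Finset.filter_subset _ _
      have hCcol : ∀ x ∈ C, χ (2*s k - x) = c0 := fun x hx => (Finset.mem_filter.mp hx).2
      have hC2 : 2 ≤ C.card := by
        have h1 : (X.card : ℝ) ≤ r * C.card := by exact_mod_cast hc0
        have h2 : (2:ℝ) ≤ (C.card:ℝ) := by nlinarith [hcard, hbigR, hBr]
        exact_mod_cast h2
      have hskl : ((n:ℤ)) ≤ s k := by
        have h1 := hlow k le_rfl
        have hkn : ((k:ℤ))*n ≤ ((r:ℤ))*n := by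
          have : ((k:ℤ)) ≤ (r:ℤ) := by exact_mod_cast hkr.le
          exact mul_le_mul_of_nonneg_right this (by positivity)
        linarith
      -- new color is distinct from old ones
      have hnew : ∀ j, j < k → c0 ≠ c j := by
        intro j hj heq
        obtain ⟨x₀, hx₀⟩ : C.Nonempty := Finset.card_pos.mp (by omega)
        have hx₀X : x₀ ∈ X := hCsub hx₀
        have hx₀I := hsub hx₀X
        rw [Finset.mem_Icc] at hx₀I
        obtain ⟨hq1, hq2⟩ := hQ x₀ hx₀X j hj
        have hsj0 : s j ≤ s 0 := by
          rcases Nat.eq_zero_or_pos j with h | h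
          · rw [h]
          · exact le_of_lt (hstrict 0 j h (by omega))
        have hd : 0 < s j - s k := by
          have := hstrict j k hj le_rfl
          linarith
        refine Hno (2*s k - x₀) (s j - s k) (by linarith) hd
          (by rw [hs0] at hsj0; linarith) ⟨?_, ?_⟩
        · have e : 2*s k - x₀ + (s j - s k) = s j + s k - x₀ := by ring
          rw [e, hq2, hCcol x₀ hx₀, heq]
        · have e : 2*s k - x₀ + 2*(s j - s k) = 2*s j - x₀ := by ring
          rw [e, hq1, hCcol x₀ hx₀, heq]
      -- popular difference
      have hCsubI : C ⊆ Finset.Icc (1:ℤ) (n:ℤ) := hCsub.trans hsub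
      have hodcard : C.offDiag.card = C.card * C.card - C.card := Finset.offDiag_card _
      have hmaps : ∀ p ∈ C.offDiag,
          (if p.1 < p.2 then p.2 - p.1 else p.1 - p.2) ∈ Finset.Icc (1:ℤ) ((n:ℤ)-1) := by
        intro p hp
        rw [Finset.mem_offDiag] at hp
        obtain ⟨h1, h2, h3⟩ := hp
        have e1 := hCsubI h1
        have e2 := hCsubI h2
        rw [Finset.mem_Icc] at e1 e2 ⊢
        split <;> omega
      have hsum2 := Finset.card_eq_sum_card_fiberwise hmaps
      have hIccCard : (Finset.Icc (1:ℤ) ((n:ℤ)-1)).card = n - 1 := by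
        rw [Int.card_Icc]
        omega
      have hIccNe : (Finset.Icc (1:ℤ) ((n:ℤ)-1)).Nonempty := by
        rw [Finset.nonempty_Icc]
        omega
      obtain ⟨δ, hδmem, hδ⟩ : ∃ δ ∈ Finset.Icc (1:ℤ) ((n:ℤ)-1), C.offDiag.card ≤
          (n-1) * (C.offDiag.filter
            (fun p => (if p.1 < p.2 then p.2 - p.1 else p.1 - p.2) = δ)).card := by
        apply Finset.exists_le_of_sum_le hIccNe
        have hs2 : ∑ δ ∈ Finset.Icc (1:ℤ) ((n:ℤ)-1), (n-1) * (C.offDiag.filter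
            (fun p => (if p.1 < p.2 then p.2 - p.1 else p.1 - p.2) = δ)).card
            = (n-1) * C.offDiag.card := by
          rw [← Finset.mul_sum, ← hsum2]
        rw [hs2, Finset.sum_const, hIccCard, smul_eq_mul]
      rw [Finset.mem_Icc] at hδmem
      set D := C.filter (fun x => x + δ ∈ C) with hDdef
      have hDsub : D ⊆ C := Finset.filter_subset _ _
      have hf1 : (C.offDiag.filter (fun p => p.2 - p.1 = δ)).card ≤ D.card := by
        apply Finset.card_le_card_of_injOn (fun p => p.1)
        · intro p hp
          rw [Finset.mem_coe, Finset.mem_filter] at hp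
          obtain ⟨hpo, hpe⟩ := hp
          rw [Finset.mem_offDiag] at hpo
          rw [Finset.mem_coe, hDdef, Finset.mem_filter]
          refine ⟨hpo.1, ?_⟩
          rw [show p.1 + δ = p.2 by omega]
          exact hpo.2.1
        · intro p hp q hq h
          simp only [Finset.mem_coe, Finset.mem_filter] at hp hq
          have h2 : p.2 = q.2 := by
            have := hp.2
            have := hq.2
            simp only at h
            omega
          exact Prod.ext h h2
      have hf2 : (C.offDiag.filter (fun p => p.1 - p.2 = δ)).card ≤ D.card := by
        apply Finset.card_le_card_of_injOn (fun p => p.2)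
        · intro p hp
          rw [Finset.mem_coe, Finset.mem_filter] at hp
          obtain ⟨hpo, hpe⟩ := hp
          rw [Finset.mem_offDiag] at hpo
          rw [Finset.mem_coe, hDdef, Finset.mem_filter]
          refine ⟨hpo.2.1, ?_⟩
          rw [show p.2 + δ = p.1 by omega]
          exact hpo.1
        · intro p hp q hq h
          simp only [Finset.mem_coe, Finset.mem_filter] at hp hq
          have h1 : p.1 = q.1 := by
            have := hp.2
            have := hq.2
            simp only at h
            omega
          exact Prod.ext h1 h
      have hfsub : C.offDiag.filter (fun p => (if p.1 < p.2 then p.2 - p.1 else p.1 - p.2) = δ) ⊆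
          (C.offDiag.filter (fun p => p.2 - p.1 = δ)) ∪
          (C.offDiag.filter (fun p => p.1 - p.2 = δ)) := by
        intro p hp
        rw [Finset.mem_filter] at hp
        rw [Finset.mem_union, Finset.mem_filter, Finset.mem_filter]
        rcases hp with ⟨hpo, hpe⟩
        by_cases hlt : p.1 < p.2
        · left
          rw [if_pos hlt] at hpe
          exact ⟨hpo, hpe⟩
        · right
          rw [if_neg hlt] at hpe
          exact ⟨hpo, hpe⟩
      have hfiber : (C.offDiag.filter
          (fun p => (if p.1 < p.2 then p.2 - p.1 else p.1 - p.2) = δ)).card ≤ 2 * D.card :=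
        le_trans (Finset.card_le_card hfsub)
          (le_trans (Finset.card_union_le _ _) (by omega))
      have hcountN : C.card * C.card - C.card ≤ (n-1) * (2 * D.card) := by
        calc C.card * C.card - C.card = C.offDiag.card := hodcard.symm
          _ ≤ (n-1) * (C.offDiag.filter
              (fun p => (if p.1 < p.2 then p.2 - p.1 else p.1 - p.2) = δ)).card := hδ
          _ ≤ (n-1) * (2 * D.card) := Nat.mul_le_mul_left _ hfiber
      have hcount : ((C.card:ℝ))^2 - C.card ≤ ((n:ℝ)-1)*(2*(D.card:ℝ)) := by
        have hle : C.card ≤ C.card * C.card := Nat.le_mul_of_pos_left _ (by omega)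
        have := (Nat.cast_le (α := ℝ)).mpr hcountN
        rw [Nat.cast_sub hle] at this
        push_cast [Nat.cast_sub (by omega : 1 ≤ n)] at this
        push_cast
        nlinarith [this]
      -- new cardinality bound
      have hnum : (n:ℝ) ≤ (8*(r:ℝ)^2)^(2^(k+1) - 1) * (D.card:ℝ) := by
        have hexp : 2^(k+1) - 1 = (2^k - 1)*2 + 1 := by
          have h2k : 1 ≤ 2^k := Nat.one_le_two_pow
          have h2 : 2^(k+1) = 2^k*2 := pow_succ 2 k
          omega
        have hBB : (8*(r:ℝ)^2)^(2^(k+1) - 1) = B^2 * (8*(r:ℝ)^2) := by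
          rw [hexp, pow_succ, pow_mul]
        rw [hBB]
        have hcc2 : (2:ℝ) ≤ (C.card:ℝ) := by exact_mod_cast hC2
        have hXc : ((X.card:ℝ)) ≤ r*(C.card:ℝ) := by exact_mod_cast hc0
        have hdd0 : (0:ℝ) ≤ (D.card:ℝ) := by positivity
        have e1 : (n:ℝ) ≤ B*((r:ℝ)*(C.card:ℝ)) := by nlinarith [hcard]
        have e2 : ((C.card:ℝ))^2 ≤ 4*(n:ℝ)*(D.card:ℝ) := by nlinarith [hcount]
        have e1sq : ((n:ℝ))^2 ≤ (B*((r:ℝ)*(C.card:ℝ)))^2 := by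
          apply pow_le_pow_left₀ (by positivity) e1
        have e2' : B^2*(r:ℝ)^2*((C.card:ℝ))^2 ≤ B^2*(r:ℝ)^2*(4*(n:ℝ)*(D.card:ℝ)) :=
          mul_le_mul_of_nonneg_left e2 (by positivity)
        have e3 : ((n:ℝ))^2 ≤ (n:ℝ)*(4*B^2*(r:ℝ)^2*(D.card:ℝ)) := by
          calc ((n:ℝ))^2 ≤ (B*((r:ℝ)*(C.card:ℝ)))^2 := e1sq
            _ = B^2*(r:ℝ)^2*((C.card:ℝ))^2 := by ring
            _ ≤ B^2*(r:ℝ)^2*(4*(n:ℝ)*(D.card:ℝ)) := e2'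
            _ = (n:ℝ)*(4*B^2*(r:ℝ)^2*(D.card:ℝ)) := by ring
        have e4 : (n:ℝ) ≤ 4*B^2*(r:ℝ)^2*(D.card:ℝ) := by
          have hnpos : (0:ℝ) < (n:ℝ) := by linarith
          nlinarith [e3, hnpos]
        nlinarith [e4, sq_nonneg B, mul_nonneg (mul_nonneg (sq_nonneg B) (sq_nonneg (r:ℝ))) hdd0]
      -- assemble
      set S : ℕ → ℤ := fun i => if i = k+1 then s k - δ else s i with hSdef
      set c' : ℕ → Fin r := fun j => if j = k then c0 else c j with hcdef
      have hS1 : ∀ i, i ≠ k+1 → S i = s i := by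
        intro i h
        simp [hSdef, h]
      have hS2 : S (k+1) = s k - δ := by simp [hSdef]
      have hc1 : ∀ j, j ≠ k → c' j = c j := by
        intro j h
        simp [hcdef, h]
      have hc2 : c' k = c0 := by simp [hcdef]
      refine ⟨S, c', D, ?_, ?_, ?_, ?_, ?_, ?_, ?_⟩
      · rw [hS1 0 (by omega)]
        exact hs0
      · intro i hi
        by_cases h : i = k+1
        · subst h
          rw [hS2]
          have h1 := hlow k le_rfl
          push_cast
          linarith [hδmem.2]
        · rw [hS1 i h]
          exact hlow i (by omega)
      · intro j i hj hi
        rw [hS1 j (by omega)]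
        by_cases h : i = k+1
        · subst h
          rw [hS2]
          have hd1 : (1:ℤ) ≤ δ := hδmem.1
          by_cases hjk : j = k
          · subst hjk
            linarith
          · have := hstrict j k (by omega) le_rfl
            linarith
        · rw [hS1 i h]
          exact hstrict j i hj (by omega)
      · exact hDsub.trans hCsubI
      · exact hnum
      · intro j j' hj hj' heq
        by_cases h1 : j = k <;> by_cases h2 : j' = k
        · omega
        · rw [h1, hc2, hc1 j' h2] at heq
          exact absurd heq (hnew j' (by omega))
        · rw [h2, hc2, hc1 j h1] at heq
          exact absurd heq.symm (hnew j (by omega))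
        · rw [hc1 j h1, hc1 j' h2] at heq
          exact hdist j j' (by omega) (by omega) heq
      · intro x hxD j hj
        have hxC : x ∈ C := hDsub hxD
        have hxdC : x + δ ∈ C := by
          have hm := Finset.mem_filter.mp hxD
          exact hm.2
        have hxX : x ∈ X := hCsub hxC
        have hxdX : x + δ ∈ X := hCsub hxdC
        by_cases h : j = k
        · subst h
          rw [hS1 j (by omega), hS2, hc2]
          constructor
          · exact hCcol x hxC
          · have e : s j + (s j - δ) - x = 2*s j - (x + δ) := by ring
            rw [e]
            exact hCcol _ hxdC
        · have hjk : j < k := by omega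
          rw [hS1 j (by omega), hS2, hc1 j h]
          constructor
          · exact (hQ x hxX j hjk).1
          · have e : s j + (s k - δ) - x = s j + s k - (x + δ) := by ring
            rw [e]
            exact (hQ (x+δ) hxdX j hjk).2
  -- endgame
  obtain ⟨s, c, X, hs0, hlow, hstrict, hsub, hcard, hdist, hQ⟩ := main r le_rfl
  have hXne : X.Nonempty := by
    rw [← Finset.card_pos]
    by_contra h
    push_neg at h
    have hc : X.card = 0 := by omega
    rw [hc] at hcard
    push_cast at hcard
    nlinarith
  obtain ⟨x, hx⟩ := hXne
  have hxI := hsub hx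
  rw [Finset.mem_Icc] at hxI
  have hinj : Function.Injective (fun j : Fin r => c j) := by
    intro a b h
    exact Fin.ext (hdist a b a.isLt b.isLt h)
  have hsurj := Finite.surjective_of_injective hinj
  obtain ⟨j, hj⟩ := hsurj (χ (2 * s r - x))
  simp only at hj
  have hjr : (j:ℕ) < r := j.isLt
  obtain ⟨h1, h2⟩ := hQ x hx j hjr
  -- bounds
  have hsr : ((n:ℤ)) ≤ s r := by
    have := hlow r le_rfl
    have h2 : ((r:ℤ))*n ≤ ((r:ℤ))*n := le_rfl
    linarith
  have hsj0 : s j ≤ s 0 := by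
    rcases Nat.eq_zero_or_pos (j:ℕ) with h | h
    · rw [h]
    · exact le_of_lt (hstrict 0 j h (le_of_lt hjr))
  have hd : 0 < s j - s r := by
    have := hstrict j r hjr le_rfl
    linarith
  refine Hno (2 * s r - x) (s j - s r) (by linarith) hd (by rw [hs0] at hsj0; linarith) ⟨?_, ?_⟩
  · have : 2 * s r - x + (s j - s r) = s j + s r - x := by ring
    rw [this, h2]; exact hj.symm
  · have : 2 * s r - x + 2*(s j - s r) = 2 * s j - x := by ring
    rw [this, h1]; exact hj.symm

/-- There is an absolute constant `c > 0` such that for every sufficiently large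
`N`, any coloring of `{1, …, N}` with at most `c * log log N` colors contains a
monochromatic 3-term arithmetic progression `x, x + d, x + 2d` with `d > 0`. -/
theorem monochromatic_arithmetic_progression :
    ∃ c : ℝ, 0 < c ∧ ∃ N₀ : ℕ, ∀ N : ℕ, N₀ ≤ N →
      ∀ r : ℕ, (r : ℝ) ≤ c * Real.log (Real.log N) →
        ∀ χ : ℕ → Fin r, ∃ x d : ℕ, 1 ≤ x ∧ 0 < d ∧ x + 2 * d ≤ N ∧
          χ x = χ (x + d) ∧ χ x = χ (x + 2 * d) := by
  refine ⟨1/100, by norm_num, 3, ?_⟩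
  intro N hN r hrc χ
  rcases Nat.eq_zero_or_pos r with hr0 | hr
  · subst hr0
    exact (χ 1).elim0
  by_contra hcon
  push_neg at hcon
  have hkey : 2*(r+1)*(2*r*(8*r^2)^(2^r - 1)) ≤ N :=
    le_trans (nat_bound r hr) (real_bound N r hr hN hrc)
  refine key_lemma N (2*r*(8*r^2)^(2^r - 1)) r hr le_rfl hkey (fun z => χ z.toNat) ?_
  intro a d h1 hd hle hcontra
  obtain ⟨e1, e2⟩ := hcontra
  have ha : a.toNat + d.toNat = (a+d).toNat := by omega
  have ha2 : a.toNat + 2*d.toNat = (a+2*d).toNat := by omega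
  have h1' : 1 ≤ a.toNat := by omega
  have hd' : 0 < d.toNat := by omega
  have hle' : a.toNat + 2*d.toNat ≤ N := by omega
  have hc := hcon a.toNat d.toNat h1' hd' hle'
  exact (hc (by rw [ha]; exact e1)) (by rw [ha2]; exact e2)
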